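/- Let C, C', P, Q be n×n real matrices. Assume (i) PCQ ≤ PC'Q entrywise; (ii) C' has an eigenvector Qu for a real eigenvalue λ', where u is a nonnegative column vector; (iii) C has a left eigenvector v^T P for a real eigenvalue λ, where v is a nonnegative row vector; and (iv) v^T P Q u > 0. Then λ ≤ λ'. Moreover, λ = λ' if and only if (PC'Q)_{ij} = (PCQ)_{ij} for all pairs (i,j) with v_i ≠ 0 and u_j ≠ 0. -/

import Mathlib

theorem stmt_2 {n : ℕ} (C C' P Q : Matrix (Fin n) (Fin n) ℝ)
    (u v : Fin n → ℝ) (lam lam' : ℝ)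
    (h1 : ∀ i j, (P * C * Q) i j ≤ (P * C' * Q) i j)
    (hu : ∀ j, 0 ≤ u j)
    (h2 : C'.mulVec (Q.mulVec u) = lam' • Q.mulVec u)
    (hv : ∀ i, 0 ≤ v i)
    (h3 : Matrix.vecMul (Matrix.vecMul v P) C = lam • Matrix.vecMul v P)
    (h4 : 0 < dotProduct (Matrix.vecMul v P) (Q.mulVec u)) :
    lam ≤ lam' ∧
      (lam = lam' ↔ ∀ i j, v i ≠ 0 → u j ≠ 0 → (P * C' * Q) i j = (P * C * Q) i j) := by
  set w := Matrix.vecMul v P with hw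
  set x := Q.mulVec u with hx
  have key1 : dotProduct v ((P * C * Q).mulVec u) = lam * dotProduct w x := by
    rw [Matrix.dotProduct_mulVec, ← Matrix.vecMul_vecMul, ← Matrix.vecMul_vecMul, ← hw, h3]
    rw [Matrix.smul_vecMul, smul_dotProduct, Matrix.dotProduct_mulVec, smul_eq_mul]
  have key2 : dotProduct v ((P * C' * Q).mulVec u) = lam' * dotProduct w x := by
    rw [Matrix.mul_assoc, ← Matrix.mulVec_mulVec, ← Matrix.mulVec_mulVec,
      Matrix.dotProduct_mulVec, ← hw, ← hx, h2, dotProduct_smul]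
    rfl
  have expand : ∀ A : Matrix (Fin n) (Fin n) ℝ,
      dotProduct v (A.mulVec u) = ∑ i, ∑ j, v i * A i j * u j := by
    intro A
    simp [dotProduct, Matrix.mulVec, Finset.mul_sum, mul_assoc]
  have hterm : ∀ i j, v i * (P * C * Q) i j * u j ≤ v i * (P * C' * Q) i j * u j := by
    intro i j
    exact mul_le_mul_of_nonneg_right (mul_le_mul_of_nonneg_left (h1 i j) (hv i)) (hu j)
  have hsum : dotProduct v ((P * C * Q).mulVec u)
      ≤ dotProduct v ((P * C' * Q).mulVec u) := by
    rw [expand, expand]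
    exact Finset.sum_le_sum fun i _ => Finset.sum_le_sum fun j _ => hterm i j
  have hle : lam ≤ lam' := by
    rw [key1, key2] at hsum
    exact le_of_mul_le_mul_right hsum h4
  refine ⟨hle, ?_⟩
  constructor
  · intro heq i j hvi huj
    -- equality of sums forces each term equal
    have hsumeq : dotProduct v ((P * C * Q).mulVec u)
        = dotProduct v ((P * C' * Q).mulVec u) := by
      rw [key1, key2, heq]
    rw [expand, expand] at hsumeq
    have h0 : ∑ p : Fin n × Fin n,
        (v p.1 * (P * C' * Q) p.1 p.2 * u p.2 - v p.1 * (P * C * Q) p.1 p.2 * u p.2) = 0 := by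
      rw [Finset.sum_sub_distrib]
      rw [Fintype.sum_prod_type, Fintype.sum_prod_type]
      linarith
    have hall := (Finset.sum_eq_zero_iff_of_nonneg
      (fun p _ => sub_nonneg.mpr (hterm p.1 p.2))).mp h0 (i, j) (Finset.mem_univ _)
    have : v i * (P * C' * Q) i j * u j = v i * (P * C * Q) i j * u j := by
      dsimp at hall; linarith
    have hvi' : 0 < v i := lt_of_le_of_ne (hv i) (Ne.symm hvi)
    have huj' : 0 < u j := lt_of_le_of_ne (hu j) (Ne.symm huj)
    have := mul_right_cancel₀ (ne_of_gt huj') this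
    exact mul_left_cancel₀ (ne_of_gt hvi') this
  · intro hpt
    have hsumeq : dotProduct v ((P * C * Q).mulVec u)
        = dotProduct v ((P * C' * Q).mulVec u) := by
      rw [expand, expand]
      refine Finset.sum_congr rfl fun i _ => Finset.sum_congr rfl fun j _ => ?_
      by_cases hvi : v i = 0
      · simp [hvi]
      by_cases huj : u j = 0
      · simp [huj]
      rw [hpt i j hvi huj]
    rw [key1, key2] at hsumeq
    exact mul_right_cancel₀ (ne_of_gt h4) hsumeq
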